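/- If m is a positive integer divisible by 4, then POS(UN_m, AN_m) = (2/3)·(m²/4 − 1). -/

import Mathlib

open Finset

/-- Earth mover's distance between two vectors in ℝ^m: the ℓ1-distance
between their prefix-sum vectors. -/
noncomputable def emd {m : ℕ} (x y : Fin m → ℝ) : ℝ :=
  ∑ k : Fin m, |(∑ i ∈ Finset.Iic k, x i) - (∑ i ∈ Finset.Iic k, y i)|

/-- The positionwise distance between two m×m matrices: the minimum over
permutations σ of the sum of EMD distances between matched columns. -/
noncomputable def POS {m : ℕ} (X Y : Matrix (Fin m) (Fin m) ℝ) : ℝ :=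
  Finset.univ.inf' Finset.univ_nonempty
    (fun σ : Equiv.Perm (Fin m) => ∑ j : Fin m, emd (fun i => X i j) (fun i => Y i (σ j)))

/-- A matrix is bistochastic (a frequency matrix) if its entries are
nonnegative and every row and every column sums to 1. -/
def Bistochastic {m : ℕ} (X : Matrix (Fin m) (Fin m) ℝ) : Prop :=
  (∀ i j, 0 ≤ X i j) ∧ (∀ i, ∑ j, X i j = 1) ∧ (∀ j, ∑ i, X i j = 1)

/-- The identity frequency matrix ID_m. -/
noncomputable def IDmat (m : ℕ) : Matrix (Fin m) (Fin m) ℝ :=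
  fun i j => if i = j then 1 else 0

/-- The uniformity frequency matrix UN_m. -/
noncomputable def UNmat (m : ℕ) : Matrix (Fin m) (Fin m) ℝ :=
  fun _ _ => 1 / m

/-- The antagonism frequency matrix AN_m = (ID_m + rID_m)/2: entries 1/2 at
positions (i,i) and (i, m+1-i) (1-indexed), i.e. (i,j) with i+j+1 = m in
0-indexed terms. -/
noncomputable def ANmat (m : ℕ) : Matrix (Fin m) (Fin m) ℝ :=
  fun i j => ((if i = j then 1 else 0) + (if (i : ℕ) + (j : ℕ) + 1 = m then 1 else 0)) / 2

/-- The stratification frequency matrix ST_m: block-diagonal with two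
(m/2)×(m/2) blocks of entries 2/m. -/
noncomputable def STmat (m : ℕ) : Matrix (Fin m) (Fin m) ℝ :=
  fun i j => if (((i : ℕ) < m / 2) ↔ ((j : ℕ) < m / 2)) then 2 / m else 0

lemma gaussZ (L : ℕ) : 2 * ∑ i ∈ Finset.range L, (i : ℤ) = L * L - L := by
  induction L with
  | zero => simp
  | succ L ih =>
    rw [Finset.sum_range_succ]
    push_cast at ih ⊢
    linarith

lemma gauss2Z (L : ℕ) : 6 * ∑ i ∈ Finset.range L, (i : ℤ)^2 = 2*(L:ℤ)^3 - 3*(L:ℤ)^2 + L := by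
  induction L with
  | zero => simp
  | succ L ih =>
    rw [Finset.sum_range_succ]
    push_cast at ih ⊢
    linear_combination ih

lemma lin_sum (A B : ℤ) (L : ℕ) :
    2 * ∑ i ∈ Finset.range L, (A + B * (i:ℤ)) = 2*L*A + B*((L:ℤ)*L - L) := by
  rw [Finset.sum_add_distrib, Finset.sum_const, ← Finset.mul_sum, Finset.card_range,
    nsmul_eq_mul]
  have h : 2 * ∑ i ∈ Finset.range L, (i : ℤ) = L * L - L := by
    induction L with
    | zero => simp
    | succ L ih => rw [Finset.sum_range_succ]; push_cast at ih ⊢; linarith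
  linear_combination B * h

lemma innerSumAN (n a b : ℕ) (ha : a < n) (hab : a + b + 1 = 2*n) :
    ∑ k ∈ Finset.range (2*n),
      |(k:ℤ) + 1 - n * ((if a ≤ k then (1:ℤ) else 0) + (if b ≤ k then (1:ℤ) else 0))|
    = a*(a+1) + ((n:ℤ) - a)*((n:ℤ) - a - 1) := by
  have hb1 : n ≤ b := by omega
  have hb2 : b ≤ 2*n := by omega
  set F : ℕ → ℤ := fun k =>
    |(k:ℤ) + 1 - n * ((if a ≤ k then (1:ℤ) else 0) + (if b ≤ k then (1:ℤ) else 0))| with hF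
  rw [Finset.range_eq_Ico,
    ← Finset.sum_Ico_consecutive F (Nat.zero_le a) (by omega : a ≤ 2*n),
    ← Finset.sum_Ico_consecutive F (by omega : a ≤ n) (by omega : n ≤ 2*n),
    ← Finset.sum_Ico_consecutive F hb1 hb2]
  have h1 : ∑ k ∈ Finset.Ico 0 a, F k = ∑ i ∈ Finset.range a, ((1:ℤ) + 1 * i) := by
    rw [Finset.sum_Ico_eq_sum_range]
    refine Finset.sum_congr (by simp) fun i hi => ?_
    simp only [Finset.mem_range] at hi
    rw [hF]
    simp only
    rw [if_neg (by omega), if_neg (by omega), abs_of_nonneg (by push_cast; simp; positivity)]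
    push_cast; ring
  have h2 : ∑ k ∈ Finset.Ico a n, F k = ∑ i ∈ Finset.range (n - a), (((n:ℤ) - a - 1) + (-1) * i) := by
    rw [Finset.sum_Ico_eq_sum_range]
    refine Finset.sum_congr rfl fun i hi => ?_
    simp only [Finset.mem_range] at hi
    rw [hF]
    simp only
    rw [if_pos (by omega), if_neg (by omega), abs_of_nonpos (by push_cast; omega)]
    push_cast [Nat.lt_sub_iff_add_lt] at hi ⊢
    ring
  have h3 : ∑ k ∈ Finset.Ico n b, F k = ∑ i ∈ Finset.range (b - n), ((1:ℤ) + 1 * i) := by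
    rw [Finset.sum_Ico_eq_sum_range]
    refine Finset.sum_congr rfl fun i hi => ?_
    simp only [Finset.mem_range] at hi
    rw [hF]
    simp only
    rw [if_pos (by omega), if_neg (by omega), abs_of_nonneg (by push_cast; omega)]
    push_cast; ring
  have h4 : ∑ k ∈ Finset.Ico b (2*n), F k = ∑ i ∈ Finset.range (2*n - b), ((a:ℤ) + (-1) * i) := by
    rw [Finset.sum_Ico_eq_sum_range]
    refine Finset.sum_congr rfl fun i hi => ?_
    simp only [Finset.mem_range] at hi
    rw [hF]
    simp only
    rw [if_pos (by omega), if_pos (by omega), abs_of_nonpos (by push_cast; omega)]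
    push_cast at hi ⊢
    have : (b:ℤ) = 2*n - 1 - a := by omega
    rw [this]; ring
  rw [h1, h2, h3, h4]
  have e1 := lin_sum 1 1 a
  have e2 := lin_sum ((n:ℤ) - a - 1) (-1) (n - a)
  have e3 := lin_sum 1 1 (b - n)
  have e4 := lin_sum (a:ℤ) (-1) (2*n - b)
  have c2 : ((n - a : ℕ) : ℤ) = (n:ℤ) - a := by omega
  have c3 : ((b - n : ℕ) : ℤ) = (b:ℤ) - n := by omega
  have c4 : ((2*n - b : ℕ) : ℤ) = 2*(n:ℤ) - b := by omega
  rw [c2] at e2; rw [c3] at e3; rw [c4] at e4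
  have hbz : (b:ℤ) = 2*(n:ℤ) - 1 - a := by omega
  rw [hbz] at e3 e4
  linarith [e1, e2, e3, e4]

lemma keyAN (n : ℕ) :
    3 * ∑ j ∈ Finset.range (2*n), ∑ k ∈ Finset.range (2*n),
      |(k:ℤ) + 1 - n * ((if j ≤ k then (1:ℤ) else 0) + (if 2*n ≤ j + k + 1 then (1:ℤ) else 0))|
    = 4*(n:ℤ)^3 - 4*n := by
  set G : ℕ → ℤ := fun p => (p:ℤ)*(p+1) + ((n:ℤ) - p)*((n:ℤ) - p - 1) with hG
  have step1 : ∑ j ∈ Finset.range (2*n), ∑ k ∈ Finset.range (2*n),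
      |(k:ℤ) + 1 - n * ((if j ≤ k then (1:ℤ) else 0) + (if 2*n ≤ j + k + 1 then (1:ℤ) else 0))|
      = ∑ j ∈ Finset.range (2*n), G (min j (2*n - 1 - j)) := by
    refine Finset.sum_congr rfl fun j hj => ?_
    simp only [Finset.mem_range] at hj
    by_cases hjn : j < n
    · rw [Nat.min_eq_left (by omega)]
      simp only [hG]
      rw [← innerSumAN n j (2*n - 1 - j) hjn (by omega)]
      refine Finset.sum_congr rfl fun k _ => ?_
      simp only [show (2*n ≤ j + k + 1) ↔ (2*n - 1 - j ≤ k) from by omega]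
    · rw [Nat.min_eq_right (by omega)]
      simp only [hG]
      rw [← innerSumAN n (2*n - 1 - j) j (by omega) (by omega)]
      refine Finset.sum_congr rfl fun k _ => ?_
      simp only [show (2*n ≤ j + k + 1) ↔ (2*n - 1 - j ≤ k) from by omega]
      rw [add_comm ((if j ≤ k then (1:ℤ) else 0)) ((if 2*n - 1 - j ≤ k then (1:ℤ) else 0))]
  rw [step1]
  have a1 : ∑ j ∈ Finset.Ico 0 n, G (min j (2*n - 1 - j)) = ∑ p ∈ Finset.range n, G p := by
    rw [← Finset.range_eq_Ico]
    exact Finset.sum_congr rfl fun j hj => by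
      simp only [Finset.mem_range] at hj
      rw [Nat.min_eq_left (by omega)]
  have a2 : ∑ j ∈ Finset.Ico n (2*n), G (min j (2*n - 1 - j)) = ∑ p ∈ Finset.range n, G p := by
    rw [Finset.sum_Ico_eq_sum_range]
    have hc : ∀ i ∈ Finset.range (2*n - n), G (min (n + i) (2*n - 1 - (n + i))) = G (n - 1 - i) := by
      intro i hi
      simp only [Finset.mem_range] at hi
      rw [Nat.min_eq_right (by omega)]
      congr 1
      omega
    rw [Finset.sum_congr rfl hc, show 2*n - n = n from by omega, Finset.sum_range_reflect]
  have step2 : ∑ j ∈ Finset.range (2*n), G (min j (2*n - 1 - j))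
      = 2 * ∑ p ∈ Finset.range n, G p := by
    calc ∑ j ∈ Finset.range (2*n), G (min j (2*n - 1 - j))
        = ∑ j ∈ Finset.Ico 0 n, G (min j (2*n - 1 - j))
          + ∑ j ∈ Finset.Ico n (2*n), G (min j (2*n - 1 - j)) := by
          rw [Finset.range_eq_Ico,
            ← Finset.sum_Ico_consecutive _ (Nat.zero_le n) (by omega : n ≤ 2*n)]
      _ = ∑ p ∈ Finset.range n, G p + ∑ p ∈ Finset.range n, G p := by rw [a1, a2]
      _ = 2 * ∑ p ∈ Finset.range n, G p := by ring
  rw [step2]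
  have expand : ∀ p ∈ Finset.range n, G p = 2*(p:ℤ)^2 + (2 - 2*(n:ℤ))*p + ((n:ℤ)^2 - n) := by
    intro p _; simp only [hG]; ring
  rw [Finset.sum_congr rfl expand]
  rw [Finset.sum_add_distrib, Finset.sum_add_distrib, ← Finset.mul_sum, ← Finset.mul_sum,
    Finset.sum_const, Finset.card_range, nsmul_eq_mul]
  have hg := gaussZ n
  have hg2 := gauss2Z n
  linear_combination 2*hg2 + (6 - 6*(n:ℤ))*hg

theorem pos_UN_AN (m : ℕ) (hm : 0 < m) (h4 : 4 ∣ m) :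
    POS (UNmat m) (ANmat m) = (2 / 3) * ((m : ℝ) ^ 2 / 4 - 1) := by
  obtain ⟨t, rfl⟩ := h4
  have ht : 0 < t := by omega
  set n := 2*t with hn
  have hmn : 4*t = 2*n := by omega
  have hm0 : ((4*t : ℕ) : ℝ) ≠ 0 := by positivity
  set f : Fin (4*t) → ℝ := fun c => emd (fun _ => (1:ℝ)/((4*t : ℕ):ℝ)) (fun i => ANmat (4*t) i c)
    with hf
  have hPOS : POS (UNmat (4*t)) (ANmat (4*t)) = ∑ j : Fin (4*t), f j := by
    unfold POS
    have h1 : (fun σ : Equiv.Perm (Fin (4*t)) =>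
        ∑ j : Fin (4*t), emd (fun i => UNmat (4*t) i j) (fun i => ANmat (4*t) i (σ j)))
        = fun _ => ∑ j : Fin (4*t), f j := by
      funext σ
      exact Equiv.sum_comp σ f
    rw [h1, Finset.inf'_const]
  rw [hPOS]
  -- compute each column emd
  have hterm : ∀ j : Fin (4*t), f j = ∑ k : Fin (4*t),
      (1/((4*t:ℕ):ℝ)) * ((|(k:ℤ) + 1 - n * ((if (j:ℕ) ≤ (k:ℕ) then (1:ℤ) else 0)
        + (if 2*n ≤ (j:ℕ) + (k:ℕ) + 1 then (1:ℤ) else 0))| : ℤ) : ℝ) := by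
    intro j
    rw [hf]
    unfold emd
    refine Finset.sum_congr rfl fun k _ => ?_
    have hS1 : ∑ _i ∈ Finset.Iic k, (1:ℝ)/((4*t:ℕ):ℝ) = ((k:ℕ)+1)/((4*t:ℕ):ℝ) := by
      rw [Finset.sum_const, Fin.card_Iic, nsmul_eq_mul]
      push_cast
      ring
    have hS2 : ∑ i ∈ Finset.Iic k, ANmat (4*t) i j
        = ((if (j:ℕ) ≤ (k:ℕ) then (1:ℝ) else 0)
          + (if 2*n ≤ (j:ℕ) + (k:ℕ) + 1 then (1:ℝ) else 0)) / 2 := by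
      unfold ANmat
      rw [← Finset.sum_div, Finset.sum_add_distrib]
      have e1 : ∑ i ∈ Finset.Iic k, (if i = j then (1:ℝ) else 0)
          = if (j:ℕ) ≤ (k:ℕ) then (1:ℝ) else 0 := by
        rw [Finset.sum_ite_eq' (Finset.Iic k) j (fun _ => (1:ℝ))]
        exact if_congr (by rw [Finset.mem_Iic, Fin.le_def]) rfl rfl
      have e2 : ∑ i ∈ Finset.Iic k, (if (i:ℕ) + (j:ℕ) + 1 = 4*t then (1:ℝ) else 0)
          = if 2*n ≤ (j:ℕ) + (k:ℕ) + 1 then (1:ℝ) else 0 := by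
        have hcond : ∀ i : Fin (4*t), ((i:ℕ) + (j:ℕ) + 1 = 4*t)
            ↔ i = (⟨2*n - 1 - (j:ℕ), by omega⟩ : Fin (4*t)) := by
          intro i
          rw [Fin.ext_iff]
          have := i.isLt
          have := j.isLt
          simp only
          omega
        simp only [hcond]
        rw [Finset.sum_ite_eq' (Finset.Iic k) _ (fun _ => (1:ℝ))]
        have := j.isLt
        have := k.isLt
        simp only [Finset.mem_Iic, Fin.le_def]
        have hiff : ((⟨2*n - 1 - (j:ℕ), by omega⟩ : Fin (4*t)) : ℕ) ≤ (k:ℕ)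
            ↔ 2*n ≤ (j:ℕ) + (k:ℕ) + 1 := by
          simp only
          omega
        rw [if_congr hiff rfl rfl]
      rw [e1, e2]
    rw [hS1, hS2, Int.cast_abs]
    rw [show (1/((4*t:ℕ):ℝ)) * |(((k:ℤ) + 1 - n * ((if (j:ℕ) ≤ (k:ℕ) then (1:ℤ) else 0)
        + (if 2*n ≤ (j:ℕ) + (k:ℕ) + 1 then (1:ℤ) else 0)) : ℤ) : ℝ)|
      = |(((k:ℤ) + 1 - n * ((if (j:ℕ) ≤ (k:ℕ) then (1:ℤ) else 0)
        + (if 2*n ≤ (j:ℕ) + (k:ℕ) + 1 then (1:ℤ) else 0)) : ℤ) : ℝ) / ((4*t:ℕ):ℝ)|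
      from by rw [abs_div, abs_of_nonneg (by positivity : (0:ℝ) ≤ ((4*t:ℕ):ℝ))]; ring]
    congr 1
    push_cast
    split_ifs <;> field_simp <;> ring_nf <;> push_cast <;> (rw [hn]; push_cast; ring)
  rw [Finset.sum_congr rfl (fun j _ => hterm j)]
  have swap2 : ∀ (g : ℕ → ℕ → ℝ), ∑ j : Fin (4*t), ∑ k : Fin (4*t), g (j:ℕ) (k:ℕ)
      = ∑ j ∈ Finset.range (4*t), ∑ k ∈ Finset.range (4*t), g j k := by
    intro g
    rw [Fin.sum_univ_eq_sum_range (fun j => ∑ k : Fin (4*t), g j (k:ℕ))]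
    exact Finset.sum_congr rfl fun j _ => Fin.sum_univ_eq_sum_range _ _
  rw [swap2 (fun j k => (1/((4*t:ℕ):ℝ)) * ((|(k:ℤ) + 1 - n * ((if j ≤ k then (1:ℤ) else 0)
        + (if 2*n ≤ j + k + 1 then (1:ℤ) else 0))| : ℤ) : ℝ))]
  simp only [← Finset.mul_sum]
  rw [show (4*t) = 2*n from hmn]
  have hk0 := keyAN n
  have hk : (3:ℝ) * ((∑ j ∈ Finset.range (2*n), ∑ k ∈ Finset.range (2*n),
      |(k:ℤ) + 1 - n * ((if j ≤ k then (1:ℤ) else 0)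
        + (if 2*n ≤ j + k + 1 then (1:ℤ) else 0))| : ℤ) : ℝ) = 4*(n:ℝ)^3 - 4*(n:ℝ) := by
    exact_mod_cast congrArg (Int.cast : ℤ → ℝ) hk0
  rw [show ∑ j ∈ Finset.range (2*n), ∑ k ∈ Finset.range (2*n),
      ((|(k:ℤ) + 1 - n * ((if j ≤ k then (1:ℤ) else 0)
        + (if 2*n ≤ j + k + 1 then (1:ℤ) else 0))| : ℤ) : ℝ)
      = ((∑ j ∈ Finset.range (2*n), ∑ k ∈ Finset.range (2*n),
      |(k:ℤ) + 1 - n * ((if j ≤ k then (1:ℤ) else 0)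
        + (if 2*n ≤ j + k + 1 then (1:ℤ) else 0))| : ℤ) : ℝ) from by push_cast; rfl]
  have hn0 : (n:ℝ) ≠ 0 := by positivity
  push_cast at hk ⊢
  field_simp
  linear_combination (4:ℝ)*hk
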